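/- Let η, δ ∈ [0,1] and let (A_i)_{i∈I} be a finite family of N×N complex matrices with Σ_i A_i† A_i = 1 satisfying Σ_i |Tr(A_i F)/N|² ≥ 1 − η (C ∈ S3(η)). Let G ⊆ ZMod N and let α : ZMod N → ℂ satisfy Σ_{g∈ZMod N} |α_g|² = 1 and Σ_{g∈G} |α_g|² = 1 − δ. For l ∈ ZMod N set ψ_l = Σ_{g∈ZMod N} α_g · f_{g+l} and φ_l = Σ_{g∈ZMod N} α_g · e_{g+l}. Then Σ_{i∈I} | (1/N) Σ_{l∈ZMod N} ⟨φ_l, A_i ψ_l⟩ − (1−δ)·Tr(A_i F)/N |² ≤ 2η·|G|² + 18δ. (That is, E_l[⟨φ_l| A_i |ψ_l⟩] = (1−δ)·E_l[⟨e_l| A_i |f_l⟩] + Err_i with Σ_i |Err_i|² ≤ 2η|G|² + 18δ.) -/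

import Mathlib

open scoped BigOperators ComplexConjugate
open Finset Matrix

/-- The `N × N` quantum Fourier transform matrix, with entries `F j k = ω^{jk} / √N`,
where `ω = exp(2πi/N)`. -/
noncomputable def QFT (N : ℕ) [NeZero N] : Matrix (ZMod N) (ZMod N) ℂ :=
  fun j k => Complex.exp (2 * (Real.pi : ℂ) * Complex.I * (j.val : ℂ) * (k.val : ℂ) / (N : ℂ))
    / (Real.sqrt N : ℂ)

variable {N : ℕ} [NeZero N]

lemma zmod_sum_val (f : ℕ → ℂ) : ∑ s : ZMod N, f s.val = ∑ j ∈ Finset.range N, f j := by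
  refine Finset.sum_nbij' (fun s => s.val) (fun j => (j : ZMod N)) ?_ ?_ ?_ ?_ ?_
  · intro s _; exact Finset.mem_range.mpr s.val_lt
  · intro j _; exact Finset.mem_univ _
  · intro s _; exact ZMod.natCast_rightInverse s
  · intro j hj; exact ZMod.val_cast_of_lt (Finset.mem_range.mp hj)
  · intro s _; rfl

lemma qft_apply (s k : ZMod N) :
    QFT N s k = Complex.exp (2 * (Real.pi : ℂ) * Complex.I / N) ^ (s.val * k.val)
      / (Real.sqrt N : ℂ) := by
  rw [QFT, ← Complex.exp_nat_mul]
  congr 1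
  push_cast
  ring

lemma qft_orthonormal (a b : ZMod N) :
    ∑ s : ZMod N, conj (QFT N s a) * QFT N s b = if a = b then 1 else 0 := by
  have hN : (0:ℝ) < N := Nat.cast_pos.mpr (Nat.pos_of_ne_zero (NeZero.ne N))
  have hNC : (N : ℂ) ≠ 0 := Nat.cast_ne_zero.mpr (NeZero.ne N)
  set ζ : ℂ := Complex.exp (2 * (Real.pi : ℂ) * Complex.I / N) with hζ
  have hprim : IsPrimitiveRoot ζ N := Complex.isPrimitiveRoot_exp N (NeZero.ne N)
  have hζN : ζ ^ N = 1 := hprim.pow_eq_one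
  have hζne : ζ ≠ 0 := Complex.exp_ne_zero _
  have hconj : conj ζ = ζ⁻¹ := by
    rw [hζ, ← Complex.exp_conj, ← Complex.exp_neg]
    congr 1
    simp [map_div₀, Complex.conj_I, Complex.conj_ofReal, map_ofNat, map_natCast]
    ring
  set w : ℂ := (ζ ^ a.val)⁻¹ * ζ ^ b.val with hw
  have hsq : (Real.sqrt N : ℂ) * (Real.sqrt N : ℂ) = (N : ℂ) := by
    rw [← Complex.ofReal_mul, Real.mul_self_sqrt hN.le]
    norm_cast
  have hterm : ∀ s : ZMod N, conj (QFT N s a) * QFT N s b = w ^ s.val / N := by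
    intro s
    rw [qft_apply, qft_apply, map_div₀, map_pow, hconj, Complex.conj_ofReal,
      div_mul_div_comm, hsq]
    congr 1
    rw [hw, mul_pow, ← inv_pow, ← pow_mul, ← pow_mul, mul_comm a.val, mul_comm b.val,
      inv_pow]
  rw [Finset.sum_congr rfl (fun s _ => hterm s), ← Finset.sum_div]
  rw [zmod_sum_val (fun j => w ^ j)]
  by_cases hab : a = b
  · subst hab
    have hw1 : w = 1 := inv_mul_cancel₀ (pow_ne_zero _ hζne)
    simp [hw1, div_self hNC]
  · have hwN : w ^ N = 1 := by
      rw [hw, mul_pow, inv_pow, ← pow_mul, ← pow_mul, mul_comm a.val N, mul_comm b.val N,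
        pow_mul, pow_mul, hζN, one_pow, one_pow, inv_one, one_mul]
    have hwne : w ≠ 1 := by
      intro h
      apply hab
      rw [hw, inv_mul_eq_one₀ (pow_ne_zero _ hζne)] at h
      exact ZMod.val_injective N (hprim.pow_inj a.val_lt b.val_lt h)
    rw [geom_sum_eq hwne, hwN]
    simp [hab]

lemma cs_complex (u w : ZMod N → ℂ) :
    ‖(∑ t : ZMod N, conj (u t) * w t)‖ ^ 2
      ≤ (∑ t : ZMod N, ‖(u t)‖ ^ 2) * (∑ t : ZMod N, ‖(w t)‖ ^ 2) := by
  have h1 : ‖(∑ t : ZMod N, conj (u t) * w t)‖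
      ≤ ∑ t : ZMod N, ‖(u t)‖ * ‖(w t)‖ := by
    refine (norm_sum_le _ _).trans (le_of_eq ?_)
    exact Finset.sum_congr rfl fun t _ => by rw [norm_mul, Complex.norm_conj]
  calc ‖(∑ t : ZMod N, conj (u t) * w t)‖ ^ 2
      ≤ (∑ t : ZMod N, ‖(u t)‖ * ‖(w t)‖) ^ 2 := by
        exact pow_le_pow_left₀ (norm_nonneg _) h1 2
    _ ≤ _ := Finset.sum_mul_sq_le_sq_mul_sq _ _ _

lemma jensen_sq (z : ZMod N → ℂ) :
    ‖((1 / N : ℂ) * ∑ l : ZMod N, z l)‖ ^ 2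
      ≤ (1 / N : ℝ) * ∑ l : ZMod N, ‖(z l)‖ ^ 2 := by
  have hN : (0:ℝ) < N := Nat.cast_pos.mpr (Nat.pos_of_ne_zero (NeZero.ne N))
  have h1 : ‖(∑ l : ZMod N, z l)‖ ^ 2 ≤ N * ∑ l : ZMod N, ‖(z l)‖ ^ 2 := by
    have := Finset.sum_mul_sq_le_sq_mul_sq Finset.univ (fun _ : ZMod N => (1:ℝ))
      (fun l => ‖(z l)‖)
    simp only [one_mul, one_pow, Finset.sum_const, Finset.card_univ, ZMod.card,
      nsmul_eq_mul, mul_one] at this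
    calc ‖(∑ l : ZMod N, z l)‖ ^ 2 ≤ (∑ l : ZMod N, ‖(z l)‖) ^ 2 :=
          pow_le_pow_left₀ (norm_nonneg _) (norm_sum_le _ _) 2
      _ ≤ _ := this
  rw [norm_mul]
  have habs : ‖(1 / (N:ℂ))‖ = 1 / (N:ℝ) := by
    rw [norm_div, norm_one, Complex.norm_natCast]
  rw [habs, mul_pow]
  calc (1 / (N:ℝ)) ^ 2 * ‖(∑ l : ZMod N, z l)‖ ^ 2
      ≤ (1 / (N:ℝ)) ^ 2 * (N * ∑ l : ZMod N, ‖(z l)‖ ^ 2) := by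
        exact mul_le_mul_of_nonneg_left h1 (by positivity)
    _ = (1 / N : ℝ) * ∑ l : ZMod N, ‖(z l)‖ ^ 2 := by
        field_simp

lemma expand_quad (B : Matrix (ZMod N) (ZMod N) ℂ) (v : ZMod N → ℂ) :
    ∑ t : ZMod N, conj ((B *ᵥ v) t) * ((B *ᵥ v) t)
      = ∑ s : ZMod N, ∑ s' : ZMod N, conj (v s) * v s' * (Bᴴ * B) s s' := by
  calc ∑ t : ZMod N, conj ((B *ᵥ v) t) * ((B *ᵥ v) t)
      = ∑ t : ZMod N, ∑ s : ZMod N, ∑ s' : ZMod N,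
          (conj (B t s) * conj (v s)) * (B t s' * v s') := by
        simp only [Matrix.mulVec, dotProduct, map_sum, _root_.map_mul,
          Finset.sum_mul_sum]
    _ = ∑ s : ZMod N, ∑ s' : ZMod N, ∑ t : ZMod N,
          (conj (B t s) * conj (v s)) * (B t s' * v s') := by
        rw [Finset.sum_comm]
        exact Finset.sum_congr rfl fun s _ => Finset.sum_comm
    _ = _ := by
        refine Finset.sum_congr rfl fun s _ => Finset.sum_congr rfl fun s' _ => ?_
        rw [Matrix.mul_apply, Finset.mul_sum]
        exact Finset.sum_congr rfl fun t _ => by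
          rw [Matrix.conjTranspose_apply]; simp only [RCLike.star_def]; ring

lemma kraus_sum {I : Type} [Fintype I] (A : I → Matrix (ZMod N) (ZMod N) ℂ)
    (hK : ∑ i : I, (A i)ᴴ * A i = 1) (v : ZMod N → ℂ) :
    ∑ i : I, ∑ t : ZMod N, conj ((A i *ᵥ v) t) * ((A i *ᵥ v) t)
      = ∑ s : ZMod N, conj (v s) * v s := by
  have : ∀ i : I, ∑ t : ZMod N, conj ((A i *ᵥ v) t) * ((A i *ᵥ v) t)
      = ∑ s : ZMod N, ∑ s' : ZMod N, conj (v s) * v s' * ((A i)ᴴ * A i) s s' :=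
    fun i => expand_quad (A i) v
  rw [Finset.sum_congr rfl fun i _ => this i, Finset.sum_comm]
  refine Finset.sum_congr rfl fun s _ => ?_
  rw [Finset.sum_comm]
  have : ∀ s' : ZMod N, ∑ i : I, conj (v s) * v s' * ((A i)ᴴ * A i) s s'
      = conj (v s) * v s' * ((1 : Matrix (ZMod N) (ZMod N) ℂ) s s') := by
    intro s'
    rw [← Finset.mul_sum, ← hK]
    congr 1
    simp [Matrix.sum_apply]
  rw [Finset.sum_congr rfl fun s' _ => this s']
  simp [Matrix.one_apply]

lemma sum_shift (f : ZMod N → ℝ) (l : ZMod N) : ∑ t : ZMod N, f t = ∑ k : ZMod N, f (k + l) :=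
  (Fintype.sum_equiv (Equiv.addRight l) (fun k => f (k + l)) f (fun _ => rfl)).symm

lemma sum_shiftC (f : ZMod N → ℂ) (l : ZMod N) : ∑ t : ZMod N, f t = ∑ k : ZMod N, f (k + l) :=
  (Fintype.sum_equiv (Equiv.addRight l) (fun k => f (k + l)) f (fun _ => rfl)).symm

lemma sum_mul_sum_comm (S T : Finset (ZMod N)) (f g : ZMod N → ZMod N → ℂ) :
    ∑ s : ZMod N, (∑ a ∈ S, f a s) * (∑ b ∈ T, g b s)
      = ∑ a ∈ S, ∑ b ∈ T, ∑ s : ZMod N, f a s * g b s := by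
  simp only [Finset.sum_mul_sum]
  rw [Finset.sum_comm]
  exact Finset.sum_congr rfl fun a _ => Finset.sum_comm

lemma ofReal_sum_abs_sq (S : Finset (ZMod N)) (w : ZMod N → ℂ) :
    ((∑ t ∈ S, ‖(w t)‖ ^ 2 : ℝ) : ℂ) = ∑ t ∈ S, conj (w t) * w t := by
  rw [Complex.ofReal_sum]
  exact Finset.sum_congr rfl fun t _ => by
    rw [Complex.sq_norm, Complex.normSq_eq_conj_mul_self]

lemma kraus_sum_real {I : Type} [Fintype I] (A : I → Matrix (ZMod N) (ZMod N) ℂ)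
    (hK : ∑ i : I, (A i)ᴴ * A i = 1) (v : ZMod N → ℂ) :
    ∑ i : I, ∑ t : ZMod N, ‖((A i *ᵥ v) t)‖ ^ 2
      = ∑ s : ZMod N, ‖(v s)‖ ^ 2 := by
  apply Complex.ofReal_injective
  rw [Complex.ofReal_sum, ofReal_sum_abs_sq Finset.univ v, ← kraus_sum A hK v]
  exact Finset.sum_congr rfl fun i _ => ofReal_sum_abs_sq Finset.univ _

lemma qft_comb_norm (β : ZMod N → ℂ) (S : Finset (ZMod N)) (l : ZMod N) :
    ∑ s : ZMod N, ‖(∑ g ∈ S, β g * QFT N s (g + l))‖ ^ 2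
      = ∑ g ∈ S, ‖(β g)‖ ^ 2 := by
  apply Complex.ofReal_injective
  rw [ofReal_sum_abs_sq Finset.univ _, ofReal_sum_abs_sq S β]
  have expand : ∑ s : ZMod N, conj (∑ g ∈ S, β g * QFT N s (g + l)) * (∑ g ∈ S, β g * QFT N s (g + l))
      = ∑ g ∈ S, ∑ g' ∈ S, (conj (β g) * β g') * ∑ s : ZMod N, conj (QFT N s (g + l)) * QFT N s (g' + l) := by
    simp only [map_sum, _root_.map_mul]
    rw [sum_mul_sum_comm S S (fun g s => conj (β g) * conj (QFT N s (g + l)))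
      (fun g' s => β g' * QFT N s (g' + l))]
    exact Finset.sum_congr rfl fun g _ => Finset.sum_congr rfl fun g' _ => by
      rw [Finset.mul_sum]
      exact Finset.sum_congr rfl fun s _ => by ring
  rw [expand]
  have : ∀ g ∈ S, ∀ g' ∈ S, (conj (β g) * β g') * (∑ s : ZMod N, conj (QFT N s (g + l)) * QFT N s (g' + l))
      = (conj (β g) * β g') * (if g = g' then 1 else 0) := by
    intro g _ g' _
    rw [qft_orthonormal (g + l) (g' + l)]
    congr 1
    simp [add_left_inj]
  rw [Finset.sum_congr rfl fun g hg => Finset.sum_congr rfl fun g' hg' => this g hg g' hg']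
  refine Finset.sum_congr rfl fun g hg => ?_
  simp only [mul_ite, mul_one, mul_zero]
  rw [Finset.sum_ite_eq S g (fun g' => conj (β g) * β g')]
  simp [hg]


set_option maxHeartbeats 2000000 in
/-- Lemma 5.3: if `C ∈ S3(η)` with Kraus operators `A i`, `G` carries all but `δ` of
the mass of `α`, `ψ_l = Σ_g α_g f_{g+l}` and `φ_l = Σ_g α_g e_{g+l}`, then
`E_l[⟨φ_l| A_i |ψ_l⟩] = (1−δ)·Tr(A_i F)/N + Err_i` with `Σ_i |Err_i|² ≤ 2η|G|² + 18δ`. -/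
theorem error_term_bound (N : ℕ) [NeZero N] (η δ : ℝ)
    (hη : η ∈ Set.Icc (0 : ℝ) 1) (hδ : δ ∈ Set.Icc (0 : ℝ) 1)
    (I : Type) [Fintype I] (A : I → Matrix (ZMod N) (ZMod N) ℂ)
    (hK : ∑ i : I, (A i)ᴴ * A i = 1)
    (hS3 : ∑ i : I, ‖((A i * QFT N).trace / (N : ℂ))‖ ^ 2 ≥ 1 - η)
    (G : Finset (ZMod N)) (α : ZMod N → ℂ)
    (hα1 : ∑ g : ZMod N, ‖(α g)‖ ^ 2 = 1)
    (hα2 : ∑ g ∈ G, ‖(α g)‖ ^ 2 = 1 - δ) :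
    ∑ i : I, ‖(
        (1 / N : ℂ) * (∑ l : ZMod N, ∑ t : ZMod N,
          (starRingEnd ℂ) (∑ g : ZMod N, α g * (if t = g + l then 1 else 0)) *
            ((A i *ᵥ fun s => ∑ g : ZMod N, α g * QFT N s (g + l)) t))
        - ((1 - δ : ℝ) : ℂ) * (A i * QFT N).trace / (N : ℂ))‖ ^ 2
      ≤ 2 * η * (G.card : ℝ) ^ 2 + 18 * δ := by
  obtain ⟨hη0, hη1⟩ := hη
  obtain ⟨hδ0, hδ1⟩ := hδ
  have hNR : (0:ℝ) < N := Nat.cast_pos.mpr (Nat.pos_of_ne_zero (NeZero.ne N))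
  have hNC : (N:ℂ) ≠ 0 := Nat.cast_ne_zero.mpr (NeZero.ne N)
  set M : I → Matrix (ZMod N) (ZMod N) ℂ := fun i => A i * QFT N with hM
  set ψ : ZMod N → ZMod N → ℂ := fun l s => ∑ g : ZMod N, α g * QFT N s (g + l) with hψdef
  set ψB : ZMod N → ZMod N → ℂ := fun l s => ∑ g ∈ Gᶜ, α g * QFT N s (g + l) with hψBdef
  set φG : ZMod N → ZMod N → ℂ := fun l t => if t - l ∈ G then α (t - l) else 0 with hφGdef
  set φB : ZMod N → ZMod N → ℂ := fun l t => if t - l ∈ G then 0 else α (t - l) with hφBdef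
  set D : I → ZMod N → ℂ := fun i d => (1 / N : ℂ) * ∑ l : ZMod N, M i (d + l) l with hDdef
  set Off : I → ℂ := fun i => ∑ k ∈ G, ∑ g ∈ G,
    if k = g then 0 else conj (α k) * α g * D i (k - g) with hOffdef
  set T2 : I → ℂ := fun i => (1/N:ℂ) * ∑ l : ZMod N, ∑ t : ZMod N,
    conj (φG l t) * ((A i *ᵥ ψB l) t) with hT2def
  set T3 : I → ℂ := fun i => (1/N:ℂ) * ∑ l : ZMod N, ∑ t : ZMod N,
    conj (φB l t) * ((A i *ᵥ ψ l) t) with hT3def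
  -- mass facts
  have hGc : ∑ g ∈ Gᶜ, ‖(α g)‖ ^ 2 = δ := by
    have h := Finset.sum_add_sum_compl G (fun g => ‖(α g)‖ ^ 2)
    rw [hα2, hα1] at h
    linarith
  have hψnorm : ∀ l, ∑ s : ZMod N, ‖(ψ l s)‖ ^ 2 = 1 := by
    intro l
    have := qft_comb_norm α Finset.univ l
    simpa [hψdef, hα1] using this
  have hψBnorm : ∀ l, ∑ s : ZMod N, ‖(ψB l s)‖ ^ 2 = δ := by
    intro l
    have := qft_comb_norm α Gᶜ l
    simpa [hψBdef, hGc] using this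
  have hφGnorm : ∀ l, ∑ t : ZMod N, ‖(φG l t)‖ ^ 2 = 1 - δ := by
    intro l
    rw [sum_shift (fun t => ‖(φG l t)‖ ^ 2) l]
    have h1 : ∀ k : ZMod N, ‖(φG l (k + l))‖ ^ 2
        = if k ∈ G then ‖(α k)‖ ^ 2 else 0 := by
      intro k
      simp only [hφGdef, add_sub_cancel_right]
      split <;> simp
    rw [Finset.sum_congr rfl fun k _ => h1 k, Finset.sum_ite_mem, Finset.univ_inter, hα2]
  have hφBnorm : ∀ l, ∑ t : ZMod N, ‖(φB l t)‖ ^ 2 = δ := by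
    intro l
    rw [sum_shift (fun t => ‖(φB l t)‖ ^ 2) l]
    have h1 : ∀ k : ZMod N, ‖(φB l (k + l))‖ ^ 2
        = if k ∈ Gᶜ then ‖(α k)‖ ^ 2 else 0 := by
      intro k
      simp only [hφBdef, add_sub_cancel_right, Finset.mem_compl]
      split <;> simp_all
    rw [Finset.sum_congr rfl fun k _ => h1 k, Finset.sum_ite_mem, Finset.univ_inter, hGc]
  -- expansion of mulVec against Fourier combinations
  have hAψ : ∀ (i : I) (S : Finset (ZMod N)) (l t : ZMod N),
      ((A i *ᵥ fun s => ∑ g ∈ S, α g * QFT N s (g + l)) t)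
        = ∑ g ∈ S, α g * M i t (g + l) := by
    intro i S l t
    simp only [Matrix.mulVec, dotProduct, Finset.mul_sum, hM, Matrix.mul_apply]
    rw [Finset.sum_comm]
    exact Finset.sum_congr rfl fun g _ => Finset.sum_congr rfl fun s _ => by ring
  -- the key decomposition
  have hD0 : ∀ i, D i 0 = (A i * QFT N).trace / N := by
    intro i
    simp only [hDdef, zero_add, Matrix.trace, Matrix.diag, hM]
    rw [one_div, inv_mul_eq_div]
  have hkey : ∀ i, (1 / N : ℂ) * (∑ l : ZMod N, ∑ t : ZMod N,
          (starRingEnd ℂ) (∑ g : ZMod N, α g * (if t = g + l then 1 else 0)) *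
            ((A i *ᵥ fun s => ∑ g : ZMod N, α g * QFT N s (g + l)) t))
        - ((1 - δ : ℝ) : ℂ) * (A i * QFT N).trace / (N : ℂ)
        = Off i + (T2 i + T3 i) := by
    intro i
    have hφsum : ∀ (l t : ZMod N),
        (∑ g : ZMod N, α g * (if t = g + l then (1:ℂ) else 0)) = α (t - l) := by
      intro l t
      rw [Finset.sum_eq_single (t - l)]
      · simp [sub_add_cancel]
      · intro g _ hg
        have hne : t ≠ g + l := by
          intro h
          exact hg (by rw [h, add_sub_cancel_right])
        simp [hne]
      · intro h
        exact absurd (Finset.mem_univ _) h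
    have hψBmv : ∀ (l t : ZMod N), ((A i *ᵥ ψB l) t) = ∑ g ∈ Gᶜ, α g * M i t (g + l) := by
      intro l t
      simp only [hψBdef]
      exact hAψ i Gᶜ l t
    have hsplit : ∀ l : ZMod N,
        (∑ t : ZMod N, conj (α (t - l))
            * ((A i *ᵥ fun s => ∑ g : ZMod N, α g * QFT N s (g + l)) t))
        = (∑ t : ZMod N, conj (φG l t) * (∑ g ∈ G, α g * M i t (g + l)))
          + ((∑ t : ZMod N, conj (φG l t) * ((A i *ᵥ ψB l) t))
            + (∑ t : ZMod N, conj (φB l t) * ((A i *ᵥ ψ l) t))) := by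
      intro l
      rw [← Finset.sum_add_distrib, ← Finset.sum_add_distrib]
      refine Finset.sum_congr rfl fun t _ => ?_
      have h1 : conj (α (t - l)) = conj (φG l t) + conj (φB l t) := by
        rw [← _root_.map_add]
        congr 1
        by_cases h : t - l ∈ G <;> simp [hφGdef, hφBdef, h]
      have hψmv : ((A i *ᵥ ψ l) t) = ∑ g : ZMod N, α g * M i t (g + l) := by
        simp only [hψdef]
        exact hAψ i Finset.univ l t
      have h2 : ((A i *ᵥ fun s => ∑ g : ZMod N, α g * QFT N s (g + l)) t)
          = (∑ g ∈ G, α g * M i t (g + l)) + ((A i *ᵥ ψB l) t) := by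
        rw [hAψ i Finset.univ l t, hψBmv l t,
          ← Finset.sum_add_sum_compl G (fun g => α g * M i t (g + l))]
      have h3 : ((A i *ᵥ ψ l) t)
          = (∑ g ∈ G, α g * M i t (g + l)) + ((A i *ᵥ ψB l) t) := by
        rw [hψmv, hψBmv l t, ← Finset.sum_add_sum_compl G (fun g => α g * M i t (g + l))]
      rw [h1, h2]
      try rw [h3]
      ring
    have hstep0 : (∑ l : ZMod N, ∑ t : ZMod N,
          (starRingEnd ℂ) (∑ g : ZMod N, α g * (if t = g + l then 1 else 0)) *
            ((A i *ᵥ fun s => ∑ g : ZMod N, α g * QFT N s (g + l)) t))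
        = ∑ l : ZMod N, ((∑ t : ZMod N, conj (φG l t) * (∑ g ∈ G, α g * M i t (g + l)))
          + ((∑ t : ZMod N, conj (φG l t) * ((A i *ᵥ ψB l) t))
            + (∑ t : ZMod N, conj (φB l t) * ((A i *ᵥ ψ l) t)))) := by
      refine Finset.sum_congr rfl fun l _ => ?_
      rw [← hsplit l]
      exact Finset.sum_congr rfl fun t _ => by rw [hφsum l t]
    rw [hstep0, Finset.sum_add_distrib, Finset.sum_add_distrib, mul_add, mul_add]
    have hS1 : ∀ l : ZMod N,
        (∑ t : ZMod N, conj (φG l t) * (∑ g ∈ G, α g * M i t (g + l)))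
        = ∑ k ∈ G, ∑ g ∈ G, conj (α k) * α g * M i (k + l) (g + l) := by
      intro l
      rw [sum_shiftC (fun t => conj (φG l t) * (∑ g ∈ G, α g * M i t (g + l))) l]
      have h1 : ∀ k : ZMod N, conj (φG l (k + l)) * (∑ g ∈ G, α g * M i (k + l) (g + l))
          = if k ∈ G then (∑ g ∈ G, conj (α k) * α g * M i (k + l) (g + l)) else 0 := by
        intro k
        simp only [hφGdef, add_sub_cancel_right]
        split
        · rw [Finset.mul_sum]
          exact Finset.sum_congr rfl fun g _ => by ring
        · simp
      rw [Finset.sum_congr rfl fun k _ => h1 k, Finset.sum_ite_mem, Finset.univ_inter]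
    have hDkg : ∀ k g : ZMod N,
        (1/(N:ℂ)) * ∑ l : ZMod N, M i (k + l) (g + l) = D i (k - g) := by
      intro k g
      rw [hDdef]
      congr 1
      exact Fintype.sum_equiv (Equiv.addRight g) (fun l => M i (k + l) (g + l))
        (fun l => M i (k - g + l) l) (fun l => by simp only [Equiv.coe_addRight]; congr 1 <;> ring)
    have hmainterm : (1/(N:ℂ)) * (∑ l : ZMod N,
          ∑ t : ZMod N, conj (φG l t) * (∑ g ∈ G, α g * M i t (g + l)))
        = ((1 - δ : ℝ) : ℂ) * (A i * QFT N).trace / (N:ℂ) + Off i := by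
      calc (1/(N:ℂ)) * (∑ l : ZMod N,
            ∑ t : ZMod N, conj (φG l t) * (∑ g ∈ G, α g * M i t (g + l)))
          = (1/(N:ℂ)) * ∑ l : ZMod N, ∑ k ∈ G, ∑ g ∈ G,
              conj (α k) * α g * M i (k + l) (g + l) := by
            rw [Finset.sum_congr rfl fun l _ => hS1 l]
        _ = ∑ k ∈ G, ∑ g ∈ G, conj (α k) * α g * D i (k - g) := by
            rw [show (∑ l : ZMod N, ∑ k ∈ G, ∑ g ∈ G,
                conj (α k) * α g * M i (k + l) (g + l))
              = ∑ k ∈ G, ∑ g ∈ G, ∑ l : ZMod N,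
                conj (α k) * α g * M i (k + l) (g + l) from by
              rw [Finset.sum_comm]
              exact Finset.sum_congr rfl fun k _ => Finset.sum_comm]
            rw [Finset.mul_sum]
            refine Finset.sum_congr rfl fun k _ => ?_
            rw [Finset.mul_sum]
            refine Finset.sum_congr rfl fun g _ => ?_
            rw [← hDkg k g, ← Finset.mul_sum]
            ring
        _ = (∑ k ∈ G, ∑ g ∈ G, if k = g then conj (α k) * α g * D i 0 else 0) + Off i := by
            simp only [hOffdef, ← Finset.sum_add_distrib]
            refine Finset.sum_congr rfl fun k _ => Finset.sum_congr rfl fun g _ => ?_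
            by_cases h : k = g
            · subst h
              simp [sub_self]
            · simp [h]
        _ = ((1 - δ : ℝ) : ℂ) * (A i * QFT N).trace / (N:ℂ) + Off i := by
            congr 1
            have hdiag : ∀ k ∈ G, (∑ g ∈ G, if k = g then conj (α k) * α g * D i 0 else 0)
                = conj (α k) * α k * D i 0 := by
              intro k hk
              rw [Finset.sum_ite_eq G k (fun g => conj (α k) * α g * D i 0), if_pos hk]
            rw [Finset.sum_congr rfl hdiag]
            have hmass : ∑ k ∈ G, conj (α k) * α k = ((1 - δ:ℝ):ℂ) := by
              rw [← ofReal_sum_abs_sq G α, hα2]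
            rw [show (∑ k ∈ G, conj (α k) * α k * D i 0)
                = (∑ k ∈ G, conj (α k) * α k) * D i 0 from (Finset.sum_mul _ _ _).symm,
              hmass, hD0 i, mul_div_assoc]
    rw [hmainterm, hT2def, hT3def]
    ring
  -- bounds
  have hDsum : ∑ i : I, ∑ d : ZMod N, ‖(D i d)‖ ^ 2 ≤ 1 := by
    have hM_mulVec : ∀ (i : I) (l t : ZMod N), M i t l = ((A i *ᵥ fun s => QFT N s l) t) := by
      intro i l t
      simp [hM, Matrix.mul_apply, Matrix.mulVec, dotProduct]
    have hFcol : ∀ l : ZMod N, ∑ s : ZMod N, ‖(QFT N s l)‖ ^ 2 = 1 := by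
      intro l
      have h1 := qft_orthonormal l l
      rw [if_pos rfl] at h1
      have h2 := (ofReal_sum_abs_sq (Finset.univ) (fun s => QFT N s l)).trans h1
      exact_mod_cast h2
    have step1 : ∀ (i : I) (d : ZMod N), ‖(D i d)‖ ^ 2
        ≤ (1/N:ℝ) * ∑ l : ZMod N, ‖(M i (d + l) l)‖ ^ 2 := by
      intro i d
      rw [hDdef]
      exact jensen_sq _
    calc ∑ i : I, ∑ d : ZMod N, ‖(D i d)‖ ^ 2
        ≤ ∑ i : I, ∑ d : ZMod N, (1/N:ℝ) * ∑ l : ZMod N, ‖(M i (d + l) l)‖ ^ 2 :=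
          Finset.sum_le_sum fun i _ => Finset.sum_le_sum fun d _ => step1 i d
      _ = ∑ i : I, (1/N:ℝ) * ∑ l : ZMod N, ∑ t : ZMod N, ‖(M i t l)‖ ^ 2 := by
          refine Finset.sum_congr rfl fun i _ => ?_
          rw [← Finset.mul_sum]
          congr 1
          rw [Finset.sum_comm]
          exact Finset.sum_congr rfl fun l _ =>
            (sum_shift (fun t => ‖(M i t l)‖ ^ 2) l).symm
      _ = (1/N:ℝ) * ∑ l : ZMod N, ∑ i : I, ∑ t : ZMod N, ‖(M i t l)‖ ^ 2 := by
          rw [← Finset.mul_sum]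
          congr 1
          exact Finset.sum_comm
      _ = (1/N:ℝ) * ∑ l : ZMod N, (1:ℝ) := by
          congr 1
          refine Finset.sum_congr rfl fun l _ => ?_
          rw [Finset.sum_congr rfl fun i _ => Finset.sum_congr rfl fun t _ =>
            congrArg (fun z => ‖z‖ ^ 2) (hM_mulVec i l t)]
          rw [kraus_sum_real A hK (fun s => QFT N s l), hFcol l]
      _ = 1 := by
          rw [Finset.sum_const, Finset.card_univ, ZMod.card, nsmul_eq_mul]
          field_simp
  have hS3' : 1 - η ≤ ∑ i : I, ‖(D i 0)‖ ^ 2 := by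
    have : ∀ i, ‖(D i 0)‖ = ‖((A i * QFT N).trace / N)‖ := by
      intro i; rw [hD0]
    calc 1 - η ≤ ∑ i : I, ‖((A i * QFT N).trace / (N:ℂ))‖ ^ 2 := hS3
      _ = _ := Finset.sum_congr rfl fun i _ => by rw [this i]
  have hRsum : ∑ i : I, ∑ d ∈ Finset.univ.erase (0 : ZMod N), ‖(D i d)‖ ^ 2 ≤ η := by
    have h1 : ∀ i : I, ‖(D i 0)‖ ^ 2
        + ∑ d ∈ Finset.univ.erase (0 : ZMod N), ‖(D i d)‖ ^ 2
        = ∑ d : ZMod N, ‖(D i d)‖ ^ 2 := fun i =>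
      Finset.add_sum_erase Finset.univ (fun d => ‖(D i d)‖ ^ 2) (Finset.mem_univ (0 : ZMod N))
    have h2 : ∑ i : I, (‖(D i 0)‖ ^ 2
        + ∑ d ∈ Finset.univ.erase (0 : ZMod N), ‖(D i d)‖ ^ 2)
        = ∑ i : I, ∑ d : ZMod N, ‖(D i d)‖ ^ 2 :=
      Finset.sum_congr rfl fun i _ => h1 i
    rw [Finset.sum_add_distrib] at h2
    linarith
  have hOffb : ∑ i : I, ‖(Off i)‖ ^ 2 ≤ η * G.card := by
    have hper : ∀ i : I, ‖(Off i)‖ ^ 2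
        ≤ (G.card : ℝ) * ∑ d ∈ Finset.univ.erase (0:ZMod N), ‖(D i d)‖ ^ 2 := by
      intro i
      set a : ZMod N × ZMod N → ℝ := fun p => ‖(α p.1)‖ * ‖(α p.2)‖ with ha
      set b : ZMod N × ZMod N → ℝ :=
        fun p => if p.1 = p.2 then 0 else ‖(D i (p.1 - p.2))‖ with hb
      have htri : ‖(Off i)‖ ≤ ∑ p ∈ G ×ˢ G, a p * b p := by
        simp only [hOffdef]
        rw [show (∑ k ∈ G, ∑ g ∈ G, if k = g then (0:ℂ) else conj (α k) * α g * D i (k - g))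
            = ∑ p ∈ G ×ˢ G, (if p.1 = p.2 then (0:ℂ) else conj (α p.1) * α p.2 * D i (p.1 - p.2))
          from (Finset.sum_product G G
            (fun p => if p.1 = p.2 then (0:ℂ) else conj (α p.1) * α p.2 * D i (p.1 - p.2))).symm]
        refine (norm_sum_le _ _).trans (Finset.sum_le_sum fun p _ => ?_)
        by_cases h : p.1 = p.2
        · simp [h, hb, ha]
        · simp only [ha, hb, if_neg h]
          rw [norm_mul, norm_mul, Complex.norm_conj]
      have hcs : (∑ p ∈ G ×ˢ G, a p * b p)^2
          ≤ (∑ p ∈ G ×ˢ G, a p ^ 2) * (∑ p ∈ G ×ˢ G, b p ^ 2) :=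
        Finset.sum_mul_sq_le_sq_mul_sq _ _ _
      have ha2 : ∑ p ∈ G ×ˢ G, a p ^ 2 ≤ 1 := by
        rw [Finset.sum_product]
        have : ∑ k ∈ G, ∑ g ∈ G, a (k, g) ^ 2
            = (∑ k ∈ G, ‖(α k)‖ ^ 2) * (∑ g ∈ G, ‖(α g)‖ ^ 2) := by
          rw [Finset.sum_mul_sum]
          exact Finset.sum_congr rfl fun k _ => Finset.sum_congr rfl fun g _ => by
            simp [ha]; ring
        rw [this, hα2]
        nlinarith
      have hb2 : ∑ p ∈ G ×ˢ G, b p ^ 2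
          ≤ (G.card:ℝ) * ∑ d ∈ Finset.univ.erase (0:ZMod N), ‖(D i d)‖ ^ 2 := by
        rw [Finset.sum_product]
        have hinner : ∀ k ∈ G, ∑ g ∈ G, b (k, g) ^ 2
            ≤ ∑ d ∈ Finset.univ.erase (0:ZMod N), ‖(D i d)‖ ^ 2 := by
          intro k hk
          have e1 : ∑ g ∈ G, b (k, g) ^ 2
              = ∑ g ∈ G.erase k, ‖(D i (k - g))‖ ^ 2 := by
            rw [← Finset.sum_erase (a := k) G (f := fun g => b (k, g) ^ 2) (by simp [hb])]
            refine Finset.sum_congr rfl fun g hg => ?_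
            have hne : k ≠ g := fun h => (Finset.mem_erase.mp hg).1 h.symm
            simp [hb, hne]
          rw [e1]
          have e2 : ∑ g ∈ G.erase k, ‖(D i (k - g))‖ ^ 2
              = ∑ d ∈ (G.erase k).image (fun g => k - g), ‖(D i d)‖ ^ 2 := by
            rw [Finset.sum_image]
            intro x _ y _ h
            exact sub_right_injective h
          rw [e2]
          refine Finset.sum_le_sum_of_subset_of_nonneg ?_ (fun _ _ _ => by positivity)
          intro d hd
          simp only [Finset.mem_image] at hd
          obtain ⟨g, hg, rfl⟩ := hd
          have hgk : g ≠ k := (Finset.mem_erase.mp hg).1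
          exact Finset.mem_erase.mpr
            ⟨sub_ne_zero.mpr (fun h => hgk h.symm), Finset.mem_univ _⟩
        calc ∑ k ∈ G, ∑ g ∈ G, b (k, g) ^ 2
            ≤ ∑ _k ∈ G, ∑ d ∈ Finset.univ.erase (0:ZMod N), ‖(D i d)‖ ^ 2 :=
              Finset.sum_le_sum hinner
          _ = (G.card:ℝ) * ∑ d ∈ Finset.univ.erase (0:ZMod N), ‖(D i d)‖ ^ 2 := by
              rw [Finset.sum_const, nsmul_eq_mul]
      have hbnn : (0:ℝ) ≤ ∑ p ∈ G ×ˢ G, b p ^ 2 := by positivity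
      calc ‖(Off i)‖ ^ 2 ≤ (∑ p ∈ G ×ˢ G, a p * b p) ^ 2 :=
            pow_le_pow_left₀ (norm_nonneg _) htri 2
        _ ≤ (∑ p ∈ G ×ˢ G, a p ^ 2) * (∑ p ∈ G ×ˢ G, b p ^ 2) := hcs
        _ ≤ 1 * ((G.card:ℝ) * ∑ d ∈ Finset.univ.erase (0:ZMod N), ‖(D i d)‖ ^ 2) :=
            mul_le_mul ha2 hb2 hbnn zero_le_one
        _ = (G.card:ℝ) * ∑ d ∈ Finset.univ.erase (0:ZMod N), ‖(D i d)‖ ^ 2 :=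
            one_mul _
    calc ∑ i : I, ‖(Off i)‖ ^ 2
        ≤ ∑ i : I, (G.card:ℝ) * ∑ d ∈ Finset.univ.erase (0:ZMod N), ‖(D i d)‖ ^ 2 :=
          Finset.sum_le_sum fun i _ => hper i
      _ = (G.card:ℝ) * ∑ i : I, ∑ d ∈ Finset.univ.erase (0:ZMod N), ‖(D i d)‖ ^ 2 := by
          rw [← Finset.mul_sum]
      _ ≤ (G.card:ℝ) * η := mul_le_mul_of_nonneg_left hRsum (by positivity)
      _ = η * G.card := mul_comm _ _
  have hT2b : ∑ i : I, ‖(T2 i)‖ ^ 2 ≤ δ := by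
    have step1 : ∀ i : I, ‖(T2 i)‖ ^ 2
        ≤ (1/N:ℝ) * ∑ l : ZMod N, ∑ t : ZMod N, ‖((A i *ᵥ ψB l) t)‖ ^ 2 := by
      intro i
      have hj := jensen_sq (fun l => ∑ t : ZMod N, conj (φG l t) * ((A i *ᵥ ψB l) t))
      rw [hT2def]
      refine hj.trans ?_
      refine mul_le_mul_of_nonneg_left (Finset.sum_le_sum fun l _ => ?_) (by positivity)
      calc ‖(∑ t : ZMod N, conj (φG l t) * ((A i *ᵥ ψB l) t))‖ ^ 2
          ≤ (∑ t : ZMod N, ‖(φG l t)‖ ^ 2)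
            * (∑ t : ZMod N, ‖((A i *ᵥ ψB l) t)‖ ^ 2) := cs_complex _ _
        _ ≤ 1 * (∑ t : ZMod N, ‖((A i *ᵥ ψB l) t)‖ ^ 2) := by
            refine mul_le_mul_of_nonneg_right ?_ (by positivity)
            rw [hφGnorm l]; linarith
        _ = _ := one_mul _
    calc ∑ i : I, ‖(T2 i)‖ ^ 2
        ≤ ∑ i : I, (1/N:ℝ) * ∑ l : ZMod N, ∑ t : ZMod N,
            ‖((A i *ᵥ ψB l) t)‖ ^ 2 := Finset.sum_le_sum fun i _ => step1 i
      _ = (1/N:ℝ) * ∑ l : ZMod N, ∑ i : I, ∑ t : ZMod N,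
            ‖((A i *ᵥ ψB l) t)‖ ^ 2 := by
          rw [← Finset.mul_sum]
          congr 1
          exact Finset.sum_comm
      _ = (1/N:ℝ) * ∑ l : ZMod N, δ := by
          congr 1
          refine Finset.sum_congr rfl fun l _ => ?_
          rw [kraus_sum_real A hK (ψB l), hψBnorm l]
      _ = δ := by
          rw [Finset.sum_const, Finset.card_univ, ZMod.card, nsmul_eq_mul]
          field_simp
  have hT3b : ∑ i : I, ‖(T3 i)‖ ^ 2 ≤ δ := by
    have step1 : ∀ i : I, ‖(T3 i)‖ ^ 2
        ≤ (1/N:ℝ) * ∑ l : ZMod N, δ * ∑ t : ZMod N, ‖((A i *ᵥ ψ l) t)‖ ^ 2 := by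
      intro i
      have hj := jensen_sq (fun l => ∑ t : ZMod N, conj (φB l t) * ((A i *ᵥ ψ l) t))
      rw [hT3def]
      refine hj.trans ?_
      refine mul_le_mul_of_nonneg_left (Finset.sum_le_sum fun l _ => ?_) (by positivity)
      calc ‖(∑ t : ZMod N, conj (φB l t) * ((A i *ᵥ ψ l) t))‖ ^ 2
          ≤ (∑ t : ZMod N, ‖(φB l t)‖ ^ 2)
            * (∑ t : ZMod N, ‖((A i *ᵥ ψ l) t)‖ ^ 2) := cs_complex _ _
        _ = δ * (∑ t : ZMod N, ‖((A i *ᵥ ψ l) t)‖ ^ 2) := by rw [hφBnorm l]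
    calc ∑ i : I, ‖(T3 i)‖ ^ 2
        ≤ ∑ i : I, (1/N:ℝ) * ∑ l : ZMod N, δ * ∑ t : ZMod N,
            ‖((A i *ᵥ ψ l) t)‖ ^ 2 := Finset.sum_le_sum fun i _ => step1 i
      _ = (1/N:ℝ) * ∑ l : ZMod N, δ * ∑ i : I, ∑ t : ZMod N,
            ‖((A i *ᵥ ψ l) t)‖ ^ 2 := by
          rw [← Finset.mul_sum]
          congr 1
          rw [Finset.sum_comm]
          exact Finset.sum_congr rfl fun l _ => (Finset.mul_sum _ _ _).symm
      _ = (1/N:ℝ) * ∑ l : ZMod N, δ * 1 := by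
          congr 1
          refine Finset.sum_congr rfl fun l _ => ?_
          rw [kraus_sum_real A hK (ψ l), hψnorm l]
      _ = δ := by
          rw [Finset.sum_const, Finset.card_univ, ZMod.card, nsmul_eq_mul]
          field_simp
  -- assembly
  have hmain : ∑ i : I, ‖(
        (1 / N : ℂ) * (∑ l : ZMod N, ∑ t : ZMod N,
          (starRingEnd ℂ) (∑ g : ZMod N, α g * (if t = g + l then 1 else 0)) *
            ((A i *ᵥ fun s => ∑ g : ZMod N, α g * QFT N s (g + l)) t))
        - ((1 - δ : ℝ) : ℂ) * (A i * QFT N).trace / (N : ℂ))‖ ^ 2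
      ≤ 3 * (∑ i : I, ‖(Off i)‖ ^ 2) + 3 * (∑ i : I, ‖(T2 i)‖ ^ 2)
        + 3 * (∑ i : I, ‖(T3 i)‖ ^ 2) := by
    have step : ∀ i : I, ‖(Off i + (T2 i + T3 i))‖ ^ 2
        ≤ 3 * (‖(Off i)‖ ^ 2) + 3 * (‖(T2 i)‖ ^ 2)
          + 3 * (‖(T3 i)‖ ^ 2) := by
      intro i
      have habs : ‖(Off i + (T2 i + T3 i))‖
          ≤ ‖(Off i)‖ + (‖(T2 i)‖ + ‖(T3 i)‖) :=
        (norm_add_le _ _).trans (by gcongr; exact norm_add_le _ _)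
      have h0 : (0:ℝ) ≤ ‖(Off i)‖ + (‖(T2 i)‖ + ‖(T3 i)‖) := by
        positivity
      nlinarith [sq_nonneg (‖(Off i)‖ - ‖(T2 i)‖),
        sq_nonneg (‖(T2 i)‖ - ‖(T3 i)‖),
        sq_nonneg (‖(Off i)‖ - ‖(T3 i)‖),
        pow_le_pow_left₀ (norm_nonneg _) habs 2]
    calc ∑ i : I, ‖(
        (1 / N : ℂ) * (∑ l : ZMod N, ∑ t : ZMod N,
          (starRingEnd ℂ) (∑ g : ZMod N, α g * (if t = g + l then 1 else 0)) *
            ((A i *ᵥ fun s => ∑ g : ZMod N, α g * QFT N s (g + l)) t))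
        - ((1 - δ : ℝ) : ℂ) * (A i * QFT N).trace / (N : ℂ))‖ ^ 2
        = ∑ i : I, ‖(Off i + (T2 i + T3 i))‖ ^ 2 :=
          Finset.sum_congr rfl fun i _ => by rw [hkey i]
      _ ≤ ∑ i : I, (3 * (‖(Off i)‖ ^ 2) + 3 * (‖(T2 i)‖ ^ 2)
          + 3 * (‖(T3 i)‖ ^ 2)) := Finset.sum_le_sum fun i _ => step i
      _ = _ := by rw [Finset.sum_add_distrib, Finset.sum_add_distrib,
            ← Finset.mul_sum, ← Finset.mul_sum, ← Finset.mul_sum]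
  by_cases hGcard : G.card ≤ 1
  · have hOff0 : ∀ i, Off i = 0 := by
      intro i
      rw [hOffdef]
      refine Finset.sum_eq_zero fun k hk => Finset.sum_eq_zero fun g hg => ?_
      have : k = g := Finset.card_le_one.mp hGcard k hk g hg
      simp [this]
    have : ∑ i : I, ‖(Off i)‖ ^ 2 = 0 := by
      simp [fun i => hOff0 i]
    have hRHS : (0:ℝ) ≤ 2 * η * (G.card : ℝ) ^ 2 := by positivity
    linarith [hmain, hT2b, hT3b]
  · push_neg at hGcard
    have hc2 : (2:ℝ) ≤ (G.card : ℝ) := by exact_mod_cast hGcard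
    have hcard0 : (0:ℝ) ≤ (G.card : ℝ) := by positivity
    have hkey2 : (0:ℝ) ≤ η * (G.card:ℝ) * (2*(G.card:ℝ) - 3) :=
      mul_nonneg (mul_nonneg hη0 hcard0) (by linarith)
    nlinarith [hmain, hOffb, hT2b, hT3b, hkey2]
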